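/- If a bipartite state ω on C^M ⊗ C^M has fidelity at least 1−ε with the maximally entangled state, i.e., Tr[Φ ω] ≥ 1−ε with 0 ≤ ε < 1, then R_max(M_A;M_B)_ω ≥ log₂[(1−ε)M]. -/

import Mathlib

open Matrix
open scoped ComplexOrder BigOperators Classical

noncomputable section

/-- Trace norm of a complex square matrix: `‖A‖₁ = Tr √(AᴴA)`. -/
def traceNorm {n : Type*} [Fintype n] [DecidableEq n] (A : Matrix n n ℂ) : ℝ :=
  (((Matrix.posSemidef_conjTranspose_mul_self A).1.eigenvectorUnitary : Matrix n n ℂ) *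
    diagonal (((↑) : ℝ → ℂ) ∘ (√·) ∘ (Matrix.posSemidef_conjTranspose_mul_self A).1.eigenvalues) *
    (star (Matrix.posSemidef_conjTranspose_mul_self A).1.eigenvectorUnitary : Matrix n n ℂ)).trace.re

/-- Partial transpose on the second tensor factor. -/
def ptB {α β : Type*} (A : Matrix (α × β) (α × β) ℂ) : Matrix (α × β) (α × β) ℂ :=
  fun x y => A (x.1, y.2) (y.1, x.2)

/-- The maximally entangled state `Φ = |Φ⟩⟨Φ|` with `|Φ⟩ = (1/√M) ∑ᵢ |i⟩⊗|i⟩`. -/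
def maxEnt (M : ℕ) : Matrix (Fin M × Fin M) (Fin M × Fin M) ℂ :=
  fun x y => if x.1 = x.2 ∧ y.1 = y.2 then (1 / (M : ℂ)) else 0

/-- Feasible set for the max-Rains relative entropy of a bipartite state `ω`:
`{μ > 0 : ω ≤ μ σ', σ' ≥ 0, ‖T_B(σ')‖₁ ≤ 1}`. -/
def rmaxSet (M : ℕ) (ω : Matrix (Fin M × Fin M) (Fin M × Fin M) ℂ) : Set ℝ :=
  {μ : ℝ | 0 < μ ∧ ∃ σ' : Matrix (Fin M × Fin M) (Fin M × Fin M) ℂ,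
    σ'.PosSemidef ∧ traceNorm (ptB σ') ≤ 1 ∧ (μ • σ' - ω).PosSemidef}

lemma psd_diag_re_nonneg {n : Type*} [Fintype n] [DecidableEq n]
    {A : Matrix n n ℂ} (hA : A.PosSemidef) (i : n) : 0 ≤ (A i i).re := by
  have h := hA.dotProduct_mulVec_nonneg (Pi.single i 1)
  have : dotProduct (star (Pi.single i 1 : n → ℂ)) (A *ᵥ Pi.single i 1) = A i i := by
    simp [dotProduct, Pi.single_apply, mulVec, Finset.sum_ite_eq]
  rw [this] at h
  exact (Complex.le_def.mp h).1

lemma psd_trace_re_nonneg {n : Type*} [Fintype n] [DecidableEq n]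
    {A : Matrix n n ℂ} (hA : A.PosSemidef) : 0 ≤ (A.trace).re := by
  rw [Matrix.trace]
  rw [Complex.re_sum]
  exact Finset.sum_nonneg fun i _ => psd_diag_re_nonneg hA i

lemma psd_sqrt_exists {n : Type*} [Fintype n] [DecidableEq n]
    {A : Matrix n n ℂ} (hA : A.PosSemidef) :
    ∃ S : Matrix n n ℂ, S * S = A ∧ S.PosSemidef := by
  open scoped MatrixOrder in
  exact ⟨CFC.sqrt A, CFC.sqrt_mul_sqrt_self A (Matrix.nonneg_iff_posSemidef.mpr hA),
    Matrix.nonneg_iff_posSemidef.mp (CFC.sqrt_nonneg A)⟩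

lemma herm_spectral' {n : Type*} [Fintype n] [DecidableEq n]
    {A : Matrix n n ℂ} (hA : A.IsHermitian) :
    A = (hA.eigenvectorUnitary : Matrix n n ℂ) * diagonal (RCLike.ofReal ∘ hA.eigenvalues) *
      star (hA.eigenvectorUnitary : Matrix n n ℂ) := by
  conv_lhs => rw [hA.spectral_theorem]
  rw [Unitary.conjStarAlgAut_apply]

lemma sqrt_char {n : Type*} [Fintype n] [DecidableEq n] {A R : Matrix n n ℂ}
    (hR : R.PosSemidef) (h : R ^ 2 = Aᴴ * A) :
    R = ((Matrix.posSemidef_conjTranspose_mul_self A).1.eigenvectorUnitary : Matrix n n ℂ) *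
    diagonal (((↑) : ℝ → ℂ) ∘ (√·) ∘ (Matrix.posSemidef_conjTranspose_mul_self A).1.eigenvalues) *
    (star (Matrix.posSemidef_conjTranspose_mul_self A).1.eigenvectorUnitary : Matrix n n ℂ) := by
  open scoped MatrixOrder in
  have hH := Matrix.posSemidef_conjTranspose_mul_self A
  have e1 : cfc Real.sqrt (Aᴴ * A) = ((Matrix.posSemidef_conjTranspose_mul_self A).1.eigenvectorUnitary : Matrix n n ℂ) *
      diagonal (((↑) : ℝ → ℂ) ∘ (√·) ∘ (Matrix.posSemidef_conjTranspose_mul_self A).1.eigenvalues) *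
      (star (Matrix.posSemidef_conjTranspose_mul_self A).1.eigenvectorUnitary : Matrix n n ℂ) := by
    rw [hH.1.cfc_eq, IsHermitian.cfc, Unitary.conjStarAlgAut_apply]
    rfl
  have e2 : CFC.sqrt (Aᴴ * A) = R :=
    CFC.sqrt_unique (by rw [← pow_two]; exact h) (Matrix.nonneg_iff_posSemidef.mpr hR)
  rw [CFC.sqrt_eq_real_sqrt _ (Matrix.nonneg_iff_posSemidef.mpr hH), cfcₙ_eq_cfc] at e2
  rw [← e1, e2]

lemma trace_mul_psd_nonneg {n : Type*} [Fintype n] [DecidableEq n]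
    {A B : Matrix n n ℂ} (hA : A.PosSemidef) (hB : B.PosSemidef) :
    0 ≤ ((A * B).trace).re := by
  obtain ⟨S, hSS, hSpsd⟩ := psd_sqrt_exists hA
  have h2 : (A * B).trace = (S * B * S).trace := by
    conv_lhs => rw [← hSS]
    rw [mul_assoc, trace_mul_comm, mul_assoc]
  have h3 : (S * B * S).PosSemidef := by
    have h4 := hB.mul_mul_conjTranspose_same S
    rwa [hSpsd.1.eq] at h4
  rw [h2]
  exact psd_trace_re_nonneg h3


lemma trace_conj_unitary {n : Type*} [Fintype n] [DecidableEq n]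
    (V X : Matrix n n ℂ) (hV : (star V) * V = 1) :
    (V * X * (star V)).trace = X.trace := by
  rw [trace_mul_comm, ← mul_assoc, hV, one_mul]

lemma trace_diagonal_mul {n : Type*} [Fintype n] [DecidableEq n]
    (d : n → ℂ) (A : Matrix n n ℂ) :
    ((diagonal d) * A).trace = ∑ i, d i * A i i := by
  simp [Matrix.trace, Matrix.diag, Matrix.diagonal_mul]

-- diagonal entries of a matrix C with 1 ± C PSD have |re| ≤ 1
lemma diag_re_le_one {n : Type*} [Fintype n] [DecidableEq n]
    {C : Matrix n n ℂ} (h1 : (1 - C).PosSemidef) (i : n) : (C i i).re ≤ 1 := by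
  have := psd_diag_re_nonneg h1 i
  simp [Matrix.sub_apply, Matrix.one_apply] at this
  linarith

lemma neg_one_le_diag_re {n : Type*} [Fintype n] [DecidableEq n]
    {C : Matrix n n ℂ} (h2 : (1 + C).PosSemidef) (i : n) : -1 ≤ (C i i).re := by
  have := psd_diag_re_nonneg h2 i
  simp [Matrix.add_apply, Matrix.one_apply] at this
  linarith

lemma traceNorm_hermitian {n : Type*} [Fintype n] [DecidableEq n]
    {B : Matrix n n ℂ} (hB : B.IsHermitian) :
    traceNorm B = ∑ i, |hB.eigenvalues i| := by
  set V : Matrix n n ℂ := (hB.eigenvectorUnitary : Matrix n n ℂ)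
  have hV : (star V) * V = 1 := Matrix.mem_unitaryGroup_iff'.mp hB.eigenvectorUnitary.2
  set lam := hB.eigenvalues
  set dg : Matrix n n ℂ := diagonal (fun i => ((|lam i| : ℝ) : ℂ)) with hdg
  set R : Matrix n n ℂ := V * dg * (star V) with hR
  have hRpsd : R.PosSemidef := by
    apply Matrix.PosSemidef.mul_mul_conjTranspose_same (B := V)
    exact Matrix.PosSemidef.diagonal (fun i => by
      rw [Complex.le_def]; simp [abs_nonneg])
  have hRsq : R ^ 2 = Bᴴ * B := by
    rw [hB.eq]
    conv_rhs => rw [herm_spectral' hB]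
    rw [pow_two, hR]
    rw [show (V * dg * star V) * (V * dg * star V)
      = V * (dg * ((star V) * V) * dg) * star V by simp only [mul_assoc]]
    rw [show ((V : Matrix n n ℂ) * diagonal (RCLike.ofReal ∘ lam) * star V) *
        (V * diagonal (RCLike.ofReal ∘ lam) * star V)
      = V * (diagonal (RCLike.ofReal ∘ lam) * ((star V) * V) *
          diagonal (RCLike.ofReal ∘ lam)) * star V by simp only [mul_assoc]]
    rw [hV, mul_one, mul_one, hdg, diagonal_mul_diagonal, diagonal_mul_diagonal]
    congr 2
    ext i
    simp only [Function.comp_apply, ← Complex.ofReal_mul]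
    norm_num [sq_abs]
  have hsqrt := sqrt_char hRpsd hRsq
  rw [traceNorm, ← hsqrt, hR, trace_conj_unitary _ _ hV, hdg, trace_diagonal]
  rw [Complex.re_sum]
  simp

lemma trace_mul_le_traceNorm {n : Type*} [Fintype n] [DecidableEq n]
    {B C : Matrix n n ℂ} (hB : B.IsHermitian)
    (h1 : (1 - C).PosSemidef) (h2 : (1 + C).PosSemidef) :
    ((B * C).trace).re ≤ traceNorm B := by
  set V : Matrix n n ℂ := (hB.eigenvectorUnitary : Matrix n n ℂ)
  have hV : (star V) * V = 1 := Matrix.mem_unitaryGroup_iff'.mp hB.eigenvectorUnitary.2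
  set lam := hB.eigenvalues
  set D : Matrix n n ℂ := (star V) * C * V with hD
  have hD1 : (1 - D).PosSemidef := by
    have h := h1.conjTranspose_mul_mul_same V
    rw [Matrix.mul_sub, Matrix.sub_mul, Matrix.mul_one, ← Matrix.star_eq_conjTranspose, hV] at h
    exact h
  have hD2 : (1 + D).PosSemidef := by
    have h := h2.conjTranspose_mul_mul_same V
    rw [Matrix.mul_add, Matrix.add_mul, Matrix.mul_one, ← Matrix.star_eq_conjTranspose, hV] at h
    exact h
  have htr : (B * C).trace = ∑ i, (lam i : ℂ) * D i i := by
    conv_lhs => rw [herm_spectral' hB]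
    rw [show (V : Matrix n n ℂ) * diagonal (RCLike.ofReal ∘ lam) * star V * C
        = V * (diagonal (RCLike.ofReal ∘ lam) * star V * C) by simp only [mul_assoc]]
    rw [trace_mul_comm]
    rw [show diagonal (RCLike.ofReal ∘ lam) * star V * C * V
        = diagonal (RCLike.ofReal ∘ lam) * D by rw [hD]; simp only [mul_assoc]]
    rw [trace_diagonal_mul]
    rfl
  rw [htr, traceNorm_hermitian hB, Complex.re_sum]
  apply Finset.sum_le_sum
  intro i _
  have hre : ((lam i : ℂ) * D i i).re = lam i * (D i i).re := by
    simp [Complex.mul_re]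
  rw [hre]
  calc lam i * (D i i).re ≤ |lam i * (D i i).re| := le_abs_self _
    _ = |lam i| * |(D i i).re| := abs_mul _ _
    _ ≤ |lam i| * 1 := by
        apply mul_le_mul_of_nonneg_left _ (abs_nonneg _)
        rw [abs_le]
        exact ⟨neg_one_le_diag_re hD2 i, diag_re_le_one hD1 i⟩
    _ = |lam i| := mul_one _


def swapM (M : ℕ) : Matrix (Fin M × Fin M) (Fin M × Fin M) ℂ :=
  fun x y => if x.1 = y.2 ∧ x.2 = y.1 then 1 else 0

lemma complex_smul_nonneg {c : ℝ} (hc : 0 ≤ c) {z : ℂ} (hz : 0 ≤ z) : 0 ≤ c • z := by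
  rw [Complex.real_smul, Complex.le_def] at *
  constructor
  · simp only [Complex.zero_re, Complex.mul_re, Complex.ofReal_re, Complex.ofReal_im,
      Complex.zero_im] at *
    nlinarith [hz.1, hz.2]
  · simp only [Complex.mul_im, Complex.ofReal_re, Complex.ofReal_im, Complex.zero_im] at *
    simp [← hz.2]

lemma psd_smul {n : Type*} [Fintype n] [DecidableEq n]
    {A : Matrix n n ℂ} (hA : A.PosSemidef) {c : ℝ} (hc : 0 ≤ c) : (c • A).PosSemidef := by
  refine Matrix.PosSemidef.of_dotProduct_mulVec_nonneg ?_ ?_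
  · rw [Matrix.IsHermitian, conjTranspose_smul, hA.1.eq, star_trivial]
  · intro x
    rw [smul_mulVec, dotProduct_smul]
    exact complex_smul_nonneg hc (hA.dotProduct_mulVec_nonneg x)

lemma swap_herm (M : ℕ) : (swapM M).IsHermitian := by
  ext x y
  simp only [conjTranspose_apply, swapM]
  by_cases h : x.1 = y.2 ∧ x.2 = y.1
  · rw [if_pos h, if_pos ⟨h.2.symm, h.1.symm⟩]; simp
  · rw [if_neg h, if_neg (fun hc => h ⟨hc.2.symm, hc.1.symm⟩)]; simp

lemma swap_mul_self (M : ℕ) : swapM M * swapM M = 1 := by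
  ext x y
  rw [mul_apply, Fintype.sum_prod_type]
  simp [swapM, Matrix.one_apply, ite_and, ite_mul, mul_ite, Finset.sum_ite_eq,
    Finset.sum_ite_eq', Prod.ext_iff, eq_comm]

lemma one_sub_swap_psd (M : ℕ) : (1 - swapM M).PosSemidef := by
  have hh : (1 - swapM M)ᴴ = 1 - swapM M := by
    rw [conjTranspose_sub, (swap_herm M).eq, conjTranspose_one]
  have h2 : (1 - swapM M)ᴴ * (1 - swapM M) = (2:ℝ) • (1 - swapM M) := by
    rw [hh, Matrix.sub_mul, Matrix.mul_sub, Matrix.mul_sub, swap_mul_self]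
    simp only [one_mul, mul_one]
    ext x y
    simp only [Matrix.sub_apply, Matrix.smul_apply, Complex.real_smul]
    push_cast
    ring
  have h : 1 - swapM M = ((1/2 : ℝ)) • ((1 - swapM M)ᴴ * (1 - swapM M)) := by
    rw [h2, smul_smul]
    norm_num
  rw [h]
  exact psd_smul (Matrix.posSemidef_conjTranspose_mul_self _) (by norm_num)

lemma one_add_swap_psd (M : ℕ) : (1 + swapM M).PosSemidef := by
  have hh : (1 + swapM M)ᴴ = 1 + swapM M := by
    rw [conjTranspose_add, (swap_herm M).eq, conjTranspose_one]
  have h2 : (1 + swapM M)ᴴ * (1 + swapM M) = (2:ℝ) • (1 + swapM M) := by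
    rw [hh, Matrix.add_mul, Matrix.mul_add, Matrix.mul_add, swap_mul_self]
    simp only [one_mul, mul_one]
    ext x y
    simp only [Matrix.add_apply, Matrix.smul_apply, Complex.real_smul]
    push_cast
    ring
  have h : 1 + swapM M = ((1/2 : ℝ)) • ((1 + swapM M)ᴴ * (1 + swapM M)) := by
    rw [h2, smul_smul]
    norm_num
  rw [h]
  exact psd_smul (Matrix.posSemidef_conjTranspose_mul_self _) (by norm_num)


lemma maxEnt_herm (M : ℕ) : (maxEnt M).IsHermitian := by
  ext x y
  simp only [conjTranspose_apply, maxEnt]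
  by_cases h : x.1 = x.2 <;> by_cases h' : y.1 = y.2 <;>
    simp [h, h', and_comm, ← Complex.ofReal_natCast]

lemma maxEnt_psd (M : ℕ) : (maxEnt M).PosSemidef := by
  refine Matrix.PosSemidef.of_dotProduct_mulVec_nonneg (maxEnt_herm M) (fun x => ?_)
  have hmv : ∀ p : Fin M × Fin M, (maxEnt M *ᵥ x) p
      = if p.1 = p.2 then (M:ℂ)⁻¹ * ∑ j, x (j, j) else 0 := by
    intro p
    rw [mulVec, dotProduct, Fintype.sum_prod_type]
    simp [maxEnt, ite_and, ite_mul, Finset.sum_ite_eq, Finset.sum_ite_eq',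
      Finset.mul_sum, one_div]
  have key : dotProduct (star x) (maxEnt M *ᵥ x)
      = (M:ℂ)⁻¹ * ((starRingEnd ℂ) (∑ j, x (j, j)) * (∑ j, x (j, j))) := by
    rw [dotProduct, Fintype.sum_prod_type]
    simp only [hmv, Pi.star_apply]
    simp [Finset.sum_ite_eq, Finset.sum_ite_eq', mul_ite, mul_zero, map_sum,
      Finset.sum_mul, Finset.mul_sum]
    ring_nf
    rw [Finset.sum_comm]
    congr 1; ext i; congr 1; ext j; ring
  have hs : (starRingEnd ℂ) (∑ j, x (j, j)) * (∑ j, x (j, j))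
      = ((Complex.normSq (∑ j, x (j, j)) : ℝ) : ℂ) := by
    rw [mul_comm, Complex.mul_conj]
  have hM' : ((M:ℕ):ℂ)⁻¹ = (((M:ℝ)⁻¹ : ℝ) : ℂ) := by push_cast; ring
  rw [key, hs, hM', ← Complex.ofReal_mul]
  rw [Complex.zero_le_real]
  exact mul_nonneg (by positivity) (Complex.normSq_nonneg _)


lemma trace_maxEnt_mul (M : ℕ) (A : Matrix (Fin M × Fin M) (Fin M × Fin M) ℂ) :
    (maxEnt M * A).trace = (M:ℂ)⁻¹ * (ptB A * swapM M).trace := by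
  rw [Matrix.trace, Matrix.trace]
  simp only [Matrix.diag_apply, mul_apply, maxEnt, ptB, swapM]
  simp only [Fintype.sum_prod_type, ite_and, ite_mul, mul_ite, zero_mul, mul_zero,
    one_mul, mul_one, one_div]
  simp only [Finset.sum_ite_irrel, Finset.sum_const_zero, Finset.sum_ite_eq,
    Finset.sum_ite_eq', Finset.mem_univ, if_true]
  rw [Finset.sum_comm, Finset.mul_sum]
  congr 1; ext i
  rw [Finset.mul_sum]

lemma one_sub_psd {n : Type*} [Fintype n] [DecidableEq n]
    {A : Matrix n n ℂ} (hA : A.PosSemidef) (ht : A.trace = 1) :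
    ((1 : Matrix n n ℂ) - A).PosSemidef := by
  set V : Matrix n n ℂ := (hA.1.eigenvectorUnitary : Matrix n n ℂ)
  have hV : star V * V = 1 := Matrix.mem_unitaryGroup_iff'.mp hA.1.eigenvectorUnitary.2
  have hV' : V * star V = 1 := Matrix.mem_unitaryGroup_iff.mp hA.1.eigenvectorUnitary.2
  set lam := hA.1.eigenvalues
  have htr : A.trace = ∑ i, ((lam i : ℝ) : ℂ) := by
    conv_lhs => rw [herm_spectral' hA.1]
    rw [trace_conj_unitary _ _ hV, trace_diagonal]
    rfl
  have hsum : ∑ i, lam i = 1 := by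
    have h := congrArg Complex.re (htr.symm.trans ht)
    simpa [Complex.re_sum] using h
  have hle : ∀ i, lam i ≤ 1 := by
    intro i
    rw [← hsum]
    exact Finset.single_le_sum (fun j _ => hA.eigenvalues_nonneg j) (Finset.mem_univ i)
  have hdg : diagonal (fun i => ((1 - lam i : ℝ):ℂ))
      = 1 - diagonal (RCLike.ofReal ∘ lam) := by
    ext i j
    by_cases h : i = j <;> simp [diagonal, Matrix.one_apply, h, Complex.ofReal_sub]
  have hdec : (1 : Matrix n n ℂ) - A
      = V * diagonal (fun i => ((1 - lam i : ℝ):ℂ)) * star V := by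
    rw [hdg, Matrix.mul_sub, Matrix.sub_mul, Matrix.mul_one, hV', ← herm_spectral' hA.1]
  rw [hdec]
  have hpsd : (diagonal (fun i => ((1 - lam i : ℝ):ℂ))).PosSemidef :=
    Matrix.PosSemidef.diagonal (fun i => Complex.zero_le_real.mpr (by linarith [hle i]))
  have := hpsd.mul_mul_conjTranspose_same V
  rwa [← Matrix.star_eq_conjTranspose] at this
/-- If a state `ω` on `ℂ^M ⊗ ℂ^M` has overlap at least `1−ε` with the maximally
entangled state, then `R_max(ω) ≥ log₂[(1−ε)M]`. -/
theorem rmax_lower_bound_of_fidelity (M : ℕ) (hM : 0 < M)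
    (ε : ℝ) (hε0 : 0 ≤ ε) (hε1 : ε < 1)
    (ω : Matrix (Fin M × Fin M) (Fin M × Fin M) ℂ)
    (hω : ω.PosSemidef) (hωt : ω.trace = 1)
    (hfid : 1 - ε ≤ ((maxEnt M * ω).trace).re) :
    Real.logb 2 ((1 - ε) * M) ≤ Real.logb 2 (sInf (rmaxSet M ω)) := by

  have hMpos : (0:ℝ) < M := by exact_mod_cast hM
  -- every feasible μ is at least (1-ε) M
  have hlb : ∀ μ ∈ rmaxSet M ω, (1-ε)*M ≤ μ := by
    rintro μ ⟨hμ, σ', hσpsd, hσn, hsub⟩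
    have h0 : 0 ≤ ((maxEnt M * (μ • σ' - ω)).trace).re :=
      trace_mul_psd_nonneg (maxEnt_psd M) hsub
    have hexp : (maxEnt M * (μ • σ' - ω)).trace
        = μ • (maxEnt M * σ').trace - (maxEnt M * ω).trace := by
      rw [Matrix.mul_sub, Matrix.mul_smul, trace_sub, trace_smul]
    have hptb_herm : (ptB σ').IsHermitian := by
      ext x y
      rw [conjTranspose_apply]
      show star (σ' (y.1, x.2) (x.1, y.2)) = σ' (x.1, y.2) (y.1, x.2)
      calc star (σ' (y.1, x.2) (x.1, y.2))
          = σ'ᴴ (x.1, y.2) (y.1, x.2) := (conjTranspose_apply _ _ _).symm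
        _ = σ' (x.1, y.2) (y.1, x.2) := by rw [hσpsd.1.eq]
    have hdual : ((ptB σ' * swapM M).trace).re ≤ traceNorm (ptB σ') :=
      trace_mul_le_traceNorm hptb_herm (one_sub_swap_psd M) (one_add_swap_psd M)
    have ht1 : ((maxEnt M * σ').trace).re ≤ (M:ℝ)⁻¹ := by
      rw [trace_maxEnt_mul]
      have hcast : ((M:ℕ):ℂ)⁻¹ = (((M:ℝ)⁻¹:ℝ):ℂ) := by push_cast; ring
      rw [hcast, Complex.re_ofReal_mul]
      have h1 : ((ptB σ' * swapM M).trace).re ≤ 1 := le_trans hdual hσn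
      calc (M:ℝ)⁻¹ * ((ptB σ' * swapM M).trace).re ≤ (M:ℝ)⁻¹ * 1 :=
            mul_le_mul_of_nonneg_left h1 (by positivity)
        _ = (M:ℝ)⁻¹ := mul_one _
    have hcomb : 1 - ε ≤ μ * ((maxEnt M * σ').trace).re := by
      rw [hexp] at h0
      have hre : (μ • (maxEnt M * σ').trace - (maxEnt M * ω).trace).re
          = μ * ((maxEnt M * σ').trace).re - ((maxEnt M * ω).trace).re := by
        rw [Complex.sub_re, Complex.real_smul, Complex.re_ofReal_mul]
      rw [hre] at h0
      linarith
    have hfin : 1 - ε ≤ μ * (M:ℝ)⁻¹ :=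
      le_trans hcomb (mul_le_mul_of_nonneg_left ht1 (le_of_lt hμ))
    have hMne : (M:ℝ) ≠ 0 := ne_of_gt hMpos
    calc (1-ε)*M ≤ (μ * (M:ℝ)⁻¹)*M := by nlinarith
      _ = μ := by field_simp
  -- feasibility: μ = M², σ' = M⁻² • 1
  have hne : ((M:ℝ)^2) ∈ rmaxSet M ω := by
    have hMne : (M:ℝ) ≠ 0 := ne_of_gt hMpos
    refine ⟨by positivity, diagonal (fun _ => ((((M:ℝ)^2)⁻¹ : ℝ) : ℂ)), ?_, ?_, ?_⟩
    · exact Matrix.PosSemidef.diagonal (fun _ => Complex.zero_le_real.mpr (by positivity))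
    · set c : ℝ := ((M:ℝ)^2)⁻¹ with hc
      set σ' : Matrix (Fin M × Fin M) (Fin M × Fin M) ℂ := diagonal (fun _ => ((c:ℝ):ℂ)) with hσ'
      have hpt : ptB σ' = σ' := by
        ext x y
        by_cases h1 : x.1 = y.1 <;> by_cases h2 : x.2 = y.2 <;>
          simp [ptB, hσ', Matrix.diagonal_apply, Prod.ext_iff, h1, h2, eq_comm]
      have hherm : σ'.IsHermitian :=
        (Matrix.PosSemidef.diagonal (fun _ => Complex.zero_le_real.mpr (by positivity))).1
      have hpsd : σ'.PosSemidef :=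
        Matrix.PosSemidef.diagonal (fun _ => Complex.zero_le_real.mpr (by positivity))
      have hsq : σ' ^ 2 = σ'ᴴ * σ' := by rw [pow_two, hherm.eq]
      have hsqrt := sqrt_char hpsd hsq
      rw [hpt, traceNorm, ← hsqrt, hσ', trace_diagonal]
      simp only [Finset.sum_const, Finset.card_univ, Fintype.card_prod, Fintype.card_fin,
        nsmul_eq_mul]
      rw [show ((M*M : ℕ):ℂ) * ((c:ℝ):ℂ) = (((M*M : ℕ) * c : ℝ) : ℂ) by push_cast; ring]
      rw [Complex.ofReal_re, hc]
      have : ((M*M : ℕ) : ℝ) * ((M:ℝ)^2)⁻¹ = 1 := by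
        push_cast
        field_simp
      rw [this]
    · have hone : ((M:ℝ)^2) • (diagonal (fun _ => ((((M:ℝ)^2)⁻¹ : ℝ) : ℂ))
          : Matrix (Fin M × Fin M) (Fin M × Fin M) ℂ) = 1 := by
        ext x y
        by_cases h : x = y
        · subst h
          simp only [Matrix.smul_apply, Matrix.diagonal_apply_eq, Matrix.one_apply_eq,
            Complex.real_smul]
          rw [← Complex.ofReal_mul, mul_inv_cancel₀ (by positivity)]
          simp
        · simp [Matrix.diagonal_apply_ne _ h, Matrix.one_apply_ne h, h]
      rw [hone]
      exact one_sub_psd hω hωt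
  have hposarg : 0 < (1-ε)*M := mul_pos (by linarith) hMpos
  have hInf : (1-ε)*M ≤ sInf (rmaxSet M ω) := le_csInf ⟨_, hne⟩ hlb
  exact Real.logb_le_logb_of_le (by norm_num) hposarg hInf


end
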